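/- Let d ≥ 1, let I be a finite index set, let {B_i}_{i∈I} be pairwise disjoint Lebesgue-measurable subsets of ℝ^d with 0 < vol(B_i) < ∞, let f : ℝ^d → ℝ be a probability density function vanishing outside ⋃_{i∈I} B_i, set p_i = ∫_{B_i} f(x) dx, g_i = p_i / vol(B_i), and define g(x) = Σ_{i∈I} g_i · 1_{B_i}(x). For each i with p_i > 0, let R_i(x) = f(x)/g_i on B_i, let L_i(λ) = vol({x ∈ B_i : R_i(x) ≥ λ}) / vol(B_i), and assume Λ_i = ess sup_{x∈B_i} R_i(x) < ∞. Then the Kullback–Leibler divergence satisfies the upper bound ∫ f(x) log₂(f(x)/g(x)) dx ≤ Σ_{i : p_i>0} p_i ∫_1^{Λ_i} (log₂ λ + log₂ e) L_i(λ) dλ. -/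

import Mathlib

open MeasureTheory Real Filter Set
open scoped ENNReal

noncomputable def phiD (lam : ℝ) : ℝ := Real.logb 2 lam + Real.logb 2 (Real.exp 1)

lemma phiD_nonneg {lam : ℝ} (h : 1 ≤ lam) : 0 ≤ phiD lam := by
  have h1 : (0:ℝ) ≤ Real.logb 2 lam := Real.logb_nonneg one_lt_two h
  have h2 : (0:ℝ) ≤ Real.logb 2 (Real.exp 1) := by
    apply Real.logb_nonneg one_lt_two
    linarith [Real.add_one_le_exp 1]
  unfold phiD; linarith

lemma phiD_measurable : Measurable phiD := by
  have : phiD = fun x => Real.log x / Real.log 2 + Real.logb 2 (Real.exp 1) := by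
    funext x; simp [phiD, Real.logb]
  rw [this]
  exact (Real.measurable_log.div_const _).add_const _

lemma phiD_continuousOn : ContinuousOn phiD (Set.Ici (1:ℝ)) := by
  have : ∀ x ∈ Set.Ici (1:ℝ), phiD x = Real.log x / Real.log 2 + Real.logb 2 (Real.exp 1) := by
    intro x _; simp [phiD, Real.logb]
  refine ContinuousOn.congr ?_ this
  refine ContinuousOn.add (ContinuousOn.div_const ?_ _) continuousOn_const
  refine Real.continuousOn_log.mono ?_
  intro x hx
  simp only [Set.mem_compl_iff, Set.mem_singleton_iff]
  intro h; rw [h] at hx; simp at hx; linarith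

lemma phiD_intervalIntegrable {a b : ℝ} (ha : 1 ≤ a) (hb : 1 ≤ b) :
    IntervalIntegrable phiD volume a b := by
  apply ContinuousOn.intervalIntegrable
  apply phiD_continuousOn.mono
  intro x hx
  rcases Set.mem_uIcc.1 hx with h | h
  · exact le_trans ha h.1
  · exact le_trans hb h.1

lemma phiD_ftc {r : ℝ} (hr : 1 ≤ r) :
    ∫ lam in (1:ℝ)..r, phiD lam = r * Real.logb 2 r := by
  have key : ∀ lam ∈ Set.uIcc (1:ℝ) r, HasDerivAt (fun y => y * Real.log y * (Real.log 2)⁻¹)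
      (phiD lam) lam := by
    intro lam hlam
    have hlam1 : 1 ≤ lam := by
      rw [Set.uIcc_of_le hr] at hlam; exact hlam.1
    have hne : lam ≠ 0 := by linarith
    have h1 : HasDerivAt (fun y => y * Real.log y) (Real.log lam + 1) lam :=
      Real.hasDerivAt_mul_log hne
    have h2 := h1.mul_const (Real.log 2)⁻¹
    refine h2.congr_deriv ?_
    simp [phiD, Real.logb, Real.log_exp]
    ring
  have := intervalIntegral.integral_eq_sub_of_hasDerivAt key (phiD_intervalIntegrable le_rfl hr)
  rw [this]
  simp [Real.logb, Real.log_one]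
  ring

noncomputable def TD (r : ℝ) : ℝ := ∫ lam in (1:ℝ)..(max 1 r), phiD lam

lemma TD_nonneg (r : ℝ) : 0 ≤ TD r :=
  intervalIntegral.integral_nonneg (le_max_left 1 r) (fun u hu => phiD_nonneg hu.1)

lemma TD_eq {r : ℝ} (hr : 1 ≤ r) : TD r = r * Real.logb 2 r := by
  rw [TD, max_eq_right hr, phiD_ftc hr]

lemma TD_mono : Monotone TD := by
  intro r s hrs
  have h1 : (1:ℝ) ≤ max 1 r := le_max_left _ _
  have h2 : max 1 r ≤ max 1 s := max_le_max le_rfl hrs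
  unfold TD
  rw [← intervalIntegral.integral_add_adjacent_intervals
    (phiD_intervalIntegrable le_rfl h1) (phiD_intervalIntegrable h1 (le_trans h1 h2))]
  have h3 : 0 ≤ ∫ lam in (max 1 r)..(max 1 s), phiD lam :=
    intervalIntegral.integral_nonneg h2 (fun u hu => phiD_nonneg (le_trans h1 hu.1))
  linarith

lemma key_ineq {r : ℝ} (hr : 0 ≤ r) : r * Real.logb 2 r ≤ TD r := by
  rcases le_or_gt r 1 with h | h
  · have hT : TD r = 0 := by rw [TD, max_eq_left h, intervalIntegral.integral_same]
    rw [hT]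
    have hl : Real.logb 2 r ≤ 0 := Real.logb_nonpos one_lt_two hr h
    exact mul_nonpos_iff.2 (Or.inl ⟨hr, hl⟩)
  · rw [TD_eq h.le]

lemma TD_eq_setIntegral {r Λ : ℝ} (hrΛ : r ≤ Λ) :
    TD r = ∫ lam in Set.Ioc (1:ℝ) Λ, (Set.Iic r).indicator phiD lam := by
  rw [setIntegral_indicator measurableSet_Iic, Set.Ioc_inter_Iic, min_eq_right hrΛ]
  rcases le_or_gt 1 r with h | h
  · rw [TD, max_eq_right h, intervalIntegral.integral_of_le h]
  · rw [TD, max_eq_left h.le, intervalIntegral.integral_same,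
      Set.Ioc_eq_empty (by linarith)]
    simp

lemma measurable_logb2 : Measurable (fun x => Real.logb 2 x) := by
  have h := Real.measurable_log.div_const (Real.log 2)
  simpa [Real.logb] using h

lemma aux_int_mul_logb {α : Type*} [MeasurableSpace α] (μ : Measure α) [IsFiniteMeasure μ]
    {F : α → ℝ} (hF : Measurable F) (hFnn : ∀ x, 0 ≤ F x) {Λ : ℝ}
    (hle : ∀ᵐ x ∂μ, F x ≤ Λ) :
    Integrable (fun x => F x * Real.logb 2 (F x)) μ := by
  have hlog2 : 0 < Real.log 2 := Real.log_pos one_lt_two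
  set C : ℝ := 1 / Real.log 2 + Λ * |Real.logb 2 Λ| with hC
  have bound : ∀ r : ℝ, 0 ≤ r → r ≤ Λ → ‖r * Real.logb 2 r‖ ≤ C := by
    intro r hr0 hrΛ
    have hΛ0 : 0 ≤ Λ := le_trans hr0 hrΛ
    have hCge : 0 ≤ Λ * |Real.logb 2 Λ| := mul_nonneg hΛ0 (abs_nonneg _)
    rcases le_or_gt r 1 with h | h
    · rcases eq_or_lt_of_le hr0 with h0 | h0
      · rw [← h0]
        simp only [zero_mul, norm_zero, hC]
        positivity
      · have habs := Real.abs_log_mul_self_lt r h0 h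
        have heq : ‖r * Real.logb 2 r‖ = |Real.log r * r| / Real.log 2 := by
          rw [Real.norm_eq_abs, Real.logb]
          rw [show r * (Real.log r / Real.log 2) = (Real.log r * r) / Real.log 2 by ring]
          rw [abs_div, abs_of_pos hlog2]
        rw [heq, hC]
        have h1 : |Real.log r * r| / Real.log 2 ≤ 1 / Real.log 2 := by
          gcongr
        linarith
    · have hlb : 0 ≤ Real.logb 2 r := Real.logb_nonneg one_lt_two h.le
      have hnn : 0 ≤ r * Real.logb 2 r := mul_nonneg hr0 hlb
      rw [Real.norm_eq_abs, abs_of_nonneg hnn]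
      have h2 : r * Real.logb 2 r ≤ Λ * Real.logb 2 Λ := by
        apply mul_le_mul hrΛ (Real.logb_le_logb_of_le one_lt_two (by linarith) hrΛ) hlb hΛ0
      have h3 : Λ * Real.logb 2 Λ ≤ Λ * |Real.logb 2 Λ| :=
        mul_le_mul_of_nonneg_left (le_abs_self _) hΛ0
      have h4 : 0 ≤ 1 / Real.log 2 := by positivity
      rw [hC]; linarith
  refine (integrable_const C).mono' ?_ ?_
  · exact (hF.mul (measurable_logb2.comp hF)).aestronglyMeasurable
  · filter_upwards [hle] with x hx using bound _ (hFnn x) hx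

lemma binB {α : Type*} [MeasurableSpace α] (μ : Measure α) [IsFiniteMeasure μ]
    {F : α → ℝ} (hF : Measurable F) (hFnn : ∀ x, 0 ≤ F x) {Λ : ℝ}
    (hΛ1 : 1 ≤ Λ) (hle : ∀ᵐ x ∂μ, F x ≤ Λ) :
    ∫ x, F x * Real.logb 2 (F x) ∂μ
      ≤ ∫ lam in (1:ℝ)..Λ, phiD lam * (μ {x | lam ≤ F x}).toReal := by
  have hTmeas : Measurable TD := TD_mono.measurable
  have hTFint : Integrable (fun x => TD (F x)) μ := by
    refine (integrable_const (TD Λ)).mono' ((hTmeas.comp hF).aestronglyMeasurable) ?_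
    filter_upwards [hle] with x hx
    rw [Real.norm_eq_abs, abs_of_nonneg (TD_nonneg _)]
    exact TD_mono hx
  have step2 : ∫ x, F x * Real.logb 2 (F x) ∂μ ≤ ∫ x, TD (F x) ∂μ :=
    integral_mono (aux_int_mul_logb μ hF hFnn hle) hTFint (fun x => key_ineq (hFnn x))
  have hSmeas : ∀ lam : ℝ, MeasurableSet {x | lam ≤ F x} := fun lam =>
    measurableSet_le measurable_const hF
  set G : α × ℝ → ℝ≥0∞ := fun q =>
    Set.indicator {q : α × ℝ | q.2 ≤ F q.1} (fun q => ENNReal.ofReal (phiD q.2)) q with hGdef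
  have hGmeas : Measurable G := by
    apply Measurable.indicator
    · exact ENNReal.measurable_ofReal.comp (phiD_measurable.comp measurable_snd)
    · exact measurableSet_le measurable_snd (hF.comp measurable_fst)
  have hphiInt : IntegrableOn phiD (Set.Ioc (1:ℝ) Λ) volume := by
    have h1 : IntegrableOn phiD (Set.Icc (1:ℝ) Λ) volume :=
      (phiD_continuousOn.mono Set.Icc_subset_Ici_self).integrableOn_Icc
    exact h1.mono_set Set.Ioc_subset_Icc_self
  have A1 : ∫ x, TD (F x) ∂μ = (∫⁻ x, ENNReal.ofReal (TD (F x)) ∂μ).toReal :=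
    integral_eq_lintegral_of_nonneg_ae (ae_of_all _ fun x => TD_nonneg _)
      ((hTmeas.comp hF).aestronglyMeasurable)
  have A2 : ∫⁻ x, ENNReal.ofReal (TD (F x)) ∂μ
      = ∫⁻ x, (∫⁻ lam in Set.Ioc (1:ℝ) Λ, G (x, lam)) ∂μ := by
    apply lintegral_congr_ae
    filter_upwards [hle] with x hx
    rw [TD_eq_setIntegral hx]
    rw [ofReal_integral_eq_lintegral_ofReal (hphiInt.indicator measurableSet_Iic) ?_]
    · apply lintegral_congr; intro lam
      simp only [hGdef, Set.indicator_apply, Set.mem_Iic, Set.mem_setOf_eq]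
      split_ifs <;> simp
    · rw [Filter.EventuallyLE, ae_restrict_iff' measurableSet_Ioc]
      apply ae_of_all; intro lam hlam
      simp only [Pi.zero_apply, Set.indicator_apply, Set.mem_Iic]
      split_ifs
      · exact phiD_nonneg hlam.1.le
      · exact le_rfl
  have A3 : ∫⁻ x, (∫⁻ lam in Set.Ioc (1:ℝ) Λ, G (x, lam)) ∂μ
      = ∫⁻ lam in Set.Ioc (1:ℝ) Λ, ∫⁻ x, G (x, lam) ∂μ :=
    lintegral_lintegral_swap hGmeas.aemeasurable
  have A4 : ∀ lam : ℝ, ∫⁻ x, G (x, lam) ∂μ = ENNReal.ofReal (phiD lam) * μ {x | lam ≤ F x} := by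
    intro lam
    have hpt : ∀ x, G (x, lam)
        = Set.indicator {x | lam ≤ F x} (fun _ => ENNReal.ofReal (phiD lam)) x := by
      intro x; simp only [hGdef, Set.indicator_apply, Set.mem_setOf_eq]
    rw [lintegral_congr hpt, lintegral_indicator_const (hSmeas lam)]
  have A5 : ∫⁻ lam in Set.Ioc (1:ℝ) Λ, ENNReal.ofReal (phiD lam) * μ {x | lam ≤ F x}
      = ∫⁻ lam in Set.Ioc (1:ℝ) Λ,
          ENNReal.ofReal (phiD lam * (μ {x | lam ≤ F x}).toReal) := by
    apply lintegral_congr_ae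
    rw [Filter.EventuallyEq, ae_restrict_iff' measurableSet_Ioc]
    apply ae_of_all; intro lam hlam
    rw [ENNReal.ofReal_mul (phiD_nonneg hlam.1.le), ENNReal.ofReal_toReal (measure_ne_top μ _)]
  have hmeasW : AEStronglyMeasurable (fun lam => phiD lam * (μ {x | lam ≤ F x}).toReal)
      (volume.restrict (Set.Ioc (1:ℝ) Λ)) := by
    apply Measurable.aestronglyMeasurable
    apply phiD_measurable.mul
    have hanti : Antitone (fun lam => (μ {x | lam ≤ F x}).toReal) := by
      intro a b hab
      apply ENNReal.toReal_mono (measure_ne_top μ _)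
      exact measure_mono (fun x hx => le_trans hab hx)
    exact hanti.measurable
  have A6 : ∫ lam in Set.Ioc (1:ℝ) Λ, phiD lam * (μ {x | lam ≤ F x}).toReal
      = (∫⁻ lam in Set.Ioc (1:ℝ) Λ,
          ENNReal.ofReal (phiD lam * (μ {x | lam ≤ F x}).toReal)).toReal := by
    apply integral_eq_lintegral_of_nonneg_ae ?_ hmeasW
    rw [Filter.EventuallyLE, ae_restrict_iff' measurableSet_Ioc]
    apply ae_of_all; intro lam hlam
    simp only [Pi.zero_apply]
    exact mul_nonneg (phiD_nonneg hlam.1.le) ENNReal.toReal_nonneg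
  refine step2.trans (le_of_eq ?_)
  rw [intervalIntegral.integral_of_le hΛ1, A1, A2, A3, lintegral_congr A4, A5, ← A6]

/-- Upper bound on the KL divergence between a density and its
piecewise-uniform bin approximation, in terms of superlevel-set widths. -/
theorem kl_divergence_upper_bound
    {d : ℕ} (hd : 1 ≤ d) {I : Type*} [Fintype I]
    (B : I → Set (Fin d → ℝ))
    (hBmeas : ∀ i, MeasurableSet (B i))
    (hBdisj : Pairwise (Function.onFun Disjoint B))
    (hBpos : ∀ i, 0 < volume (B i))
    (hBfin : ∀ i, volume (B i) < ⊤)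
    (f : (Fin d → ℝ) → ℝ)
    (hf_meas : Measurable f)
    (hf_nonneg : ∀ x, 0 ≤ f x)
    (hf_int : ∫ x, f x = 1)
    (hf_supp : ∀ x, x ∉ ⋃ i, B i → f x = 0)
    (p : I → ℝ) (hp : ∀ i, p i = ∫ x in B i, f x)
    (gi : I → ℝ) (hgi : ∀ i, gi i = p i / (volume (B i)).toReal)
    (g : (Fin d → ℝ) → ℝ)
    (hg : ∀ x, g x = ∑ i, (B i).indicator (fun _ => gi i) x)
    (R : I → (Fin d → ℝ) → ℝ)
    (hR : ∀ i, 0 < p i → ∀ x ∈ B i, R i x = f x / gi i)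
    (L : I → ℝ → ℝ)
    (hL : ∀ i, 0 < p i → ∀ lam : ℝ,
      L i lam = (volume {x ∈ B i | lam ≤ R i x}).toReal / (volume (B i)).toReal)
    (Λ : I → ℝ)
    (hΛbdd : ∀ i, 0 < p i →
      IsBoundedUnder (· ≤ ·) (ae (volume.restrict (B i))) (R i))
    (hΛ : ∀ i, 0 < p i → Λ i = essSup (R i) (volume.restrict (B i))) :
    ∫ x, f x * Real.logb 2 (f x / g x)
      ≤ ∑ i ∈ Finset.univ.filter (fun i => 0 < p i),
          p i * ∫ lam in (1:ℝ)..(Λ i),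
            (Real.logb 2 lam + Real.logb 2 (Real.exp 1)) * L i lam := by
  classical
  have hf_integrable : Integrable f volume := by
    by_contra h
    rw [integral_undef h] at hf_int
    norm_num at hf_int
  set J := Finset.univ.filter (fun i => 0 < p i) with hJ
  have hvolpos : ∀ i, 0 < (volume (B i)).toReal := fun i =>
    ENNReal.toReal_pos (hBpos i).ne' (hBfin i).ne
  have hp_nonneg : ∀ i, 0 ≤ p i := fun i => by
    rw [hp i]; exact setIntegral_nonneg (hBmeas i) (fun x _ => hf_nonneg x)
  have hgi_pos : ∀ i, 0 < p i → 0 < gi i := fun i hpi => by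
    rw [hgi i]; exact div_pos hpi (hvolpos i)
  haveI hfm : ∀ i, IsFiniteMeasure (volume.restrict (B i)) := fun i =>
    ⟨by rw [Measure.restrict_apply_univ]; exact hBfin i⟩
  set F : I → (Fin d → ℝ) → ℝ := fun i x => f x / gi i with hFdef
  have hFmeas : ∀ i, Measurable (F i) := fun i => hf_meas.div_const _
  have hFnn : ∀ i, 0 < p i → ∀ x, 0 ≤ F i x := fun i hpi x =>
    div_nonneg (hf_nonneg x) (hgi_pos i hpi).le
  have hRF : ∀ i, 0 < p i → R i =ᵐ[volume.restrict (B i)] F i := fun i hpi => by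
    rw [Filter.EventuallyEq, ae_restrict_iff' (hBmeas i)]
    exact ae_of_all _ (fun x hx => hR i hpi x hx)
  have hFle : ∀ i, 0 < p i → ∀ᵐ x ∂(volume.restrict (B i)), F i x ≤ Λ i := by
    intro i hpi
    have h1 : ∀ᵐ x ∂(volume.restrict (B i)), R i x ≤ essSup (R i) (volume.restrict (B i)) :=
      ae_le_essSup (hΛbdd i hpi)
    filter_upwards [h1, hRF i hpi] with x ha hb
    rw [← hb, hΛ i hpi]
    exact ha
  have hFint : ∀ i, Integrable (F i) (volume.restrict (B i)) := fun i =>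
    hf_integrable.restrict.div_const _
  have hFtot : ∀ i, 0 < p i → ∫ x in B i, F i x = (volume (B i)).toReal := by
    intro i hpi
    have h1 : ∫ x in B i, F i x = (∫ x in B i, f x) / gi i := integral_div _ _
    rw [h1, ← hp i, hgi i]
    have := hvolpos i
    have := hpi
    field_simp
  have hΛ1 : ∀ i, 0 < p i → 1 ≤ Λ i := by
    intro i hpi
    have h1 : ∫ x in B i, F i x ≤ ∫ (_ : Fin d → ℝ) in B i, Λ i :=
      integral_mono_ae (hFint i) (integrable_const _) (hFle i hpi)
    rw [hFtot i hpi, setIntegral_const, smul_eq_mul, measureReal_def] at h1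
    have hv := hvolpos i
    nlinarith
  have perbin : ∀ i ∈ J, ∫ x in B i, f x * Real.logb 2 (f x / gi i)
      ≤ p i * ∫ lam in (1:ℝ)..(Λ i),
          (Real.logb 2 lam + Real.logb 2 (Real.exp 1)) * L i lam := by
    intro i hiJ
    have hpi : 0 < p i := by simpa [hJ] using hiJ
    have hgip := hgi_pos i hpi
    have heq : ∀ x, f x * Real.logb 2 (f x / gi i) = gi i * (F i x * Real.logb 2 (F i x)) := by
      intro x
      have h2 : gi i * (f x / gi i) = f x := by field_simp
      simp only [hFdef]
      rw [← mul_assoc, h2]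
    have hstep : ∫ x in B i, f x * Real.logb 2 (f x / gi i)
        = gi i * ∫ x in B i, F i x * Real.logb 2 (F i x) := by
      rw [← integral_const_mul]
      exact integral_congr_ae (ae_of_all _ heq)
    rw [hstep]
    have hbin := binB (volume.restrict (B i)) (hFmeas i) (hFnn i hpi) (hΛ1 i hpi) (hFle i hpi)
    have hset : ∀ lam : ℝ,
        (volume.restrict (B i)) {x | lam ≤ F i x} = volume {x ∈ B i | lam ≤ R i x} := by
      intro lam
      rw [Measure.restrict_apply (measurableSet_le measurable_const (hFmeas i))]
      congr 1
      ext x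
      simp only [Set.mem_inter_iff, Set.mem_setOf_eq]
      constructor
      · rintro ⟨h1, h2⟩
        exact ⟨h2, by rw [hR i hpi x h2]; exact h1⟩
      · rintro ⟨h2, h1⟩
        rw [hR i hpi x h2] at h1
        exact ⟨h1, h2⟩
    have hL' : ∀ lam : ℝ, phiD lam * ((volume.restrict (B i)) {x | lam ≤ F i x}).toReal
        = ((Real.logb 2 lam + Real.logb 2 (Real.exp 1)) * L i lam) * (volume (B i)).toReal := by
      intro lam
      rw [hset lam, hL i hpi lam]
      have hv := (hvolpos i).ne'
      simp only [phiD]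
      field_simp
    calc gi i * ∫ x, F i x * Real.logb 2 (F i x) ∂(volume.restrict (B i))
        ≤ gi i * ∫ lam in (1:ℝ)..(Λ i),
            phiD lam * ((volume.restrict (B i)) {x | lam ≤ F i x}).toReal :=
          mul_le_mul_of_nonneg_left hbin hgip.le
      _ = p i * ∫ lam in (1:ℝ)..(Λ i),
            (Real.logb 2 lam + Real.logb 2 (Real.exp 1)) * L i lam := by
          simp only [hL']
          rw [intervalIntegral.integral_mul_const, hgi i]
          have hv := (hvolpos i).ne'
          field_simp
  have hzero : ∀ᵐ x, ∀ i, ¬ (0 < p i) → x ∈ B i → f x = 0 := by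
    rw [ae_all_iff]
    intro i
    by_cases hpi : 0 < p i
    · exact ae_of_all _ (fun x h => (h hpi).elim)
    · have hp0 : (∫ x in B i, f x) = 0 := by rw [← hp i]; exact le_antisymm (not_lt.1 hpi) (hp_nonneg i) ▸ rfl
      have hae : f =ᵐ[volume.restrict (B i)] 0 :=
        (setIntegral_eq_zero_iff_of_nonneg_ae (ae_of_all _ hf_nonneg)
          hf_integrable.integrableOn).1 hp0
      rw [Filter.EventuallyEq, ae_restrict_iff' (hBmeas i)] at hae
      filter_upwards [hae] with x hx _ hmem using hx hmem
  have haeeq : (fun x => f x * Real.logb 2 (f x / g x)) =ᵐ[volume]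
      (fun x => ∑ i ∈ J, (B i).indicator (fun y => f y * Real.logb 2 (f y / gi i)) x) := by
    filter_upwards [hzero] with x hx
    by_cases hxS : ∃ j, x ∈ B j
    · obtain ⟨j, hj⟩ := hxS
      have hnot : ∀ i, i ≠ j → x ∉ B i := fun i hij hmem =>
        (Set.disjoint_left.1 (hBdisj hij)) hmem hj
      by_cases hpj : 0 < p j
      · have hgx : g x = gi j := by
          rw [hg x, Finset.sum_eq_single j]
          · exact Set.indicator_of_mem hj _
          · intro i _ hij; exact Set.indicator_of_notMem (hnot i hij) _
          · intro habs; exact absurd (Finset.mem_univ j) habs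
        have hGx : (∑ i ∈ J, (B i).indicator (fun y => f y * Real.logb 2 (f y / gi i)) x)
            = f x * Real.logb 2 (f x / gi j) := by
          rw [Finset.sum_eq_single j]
          · exact Set.indicator_of_mem hj _
          · intro i _ hij; exact Set.indicator_of_notMem (hnot i hij) _
          · intro habs; exact absurd (by simp [hJ, hpj] : j ∈ J) habs
        rw [hGx, hgx]
      · have hfx : f x = 0 := hx j hpj hj
        have hGx : (∑ i ∈ J, (B i).indicator (fun y => f y * Real.logb 2 (f y / gi i)) x)
            = 0 := by
          apply Finset.sum_eq_zero
          intro i hiJ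
          have hij : i ≠ j := by
            rintro rfl
            exact hpj (by simpa [hJ] using hiJ)
          exact Set.indicator_of_notMem (hnot i hij) _
        rw [hGx, hfx, zero_mul]
    · push_neg at hxS
      have hfx : f x = 0 := hf_supp x (by simpa using hxS)
      have hGx : (∑ i ∈ J, (B i).indicator (fun y => f y * Real.logb 2 (f y / gi i)) x)
          = 0 := Finset.sum_eq_zero (fun i _ => Set.indicator_of_notMem (hxS i) _)
      rw [hGx, hfx, zero_mul]
  have hterm_int : ∀ i ∈ J,
      Integrable ((B i).indicator (fun y => f y * Real.logb 2 (f y / gi i))) volume := by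
    intro i hiJ
    have hpi : 0 < p i := by simpa [hJ] using hiJ
    rw [integrable_indicator_iff (hBmeas i)]
    have hint : Integrable (fun y => gi i * (F i y * Real.logb 2 (F i y)))
        (volume.restrict (B i)) :=
      (aux_int_mul_logb _ (hFmeas i) (hFnn i hpi) (hFle i hpi)).const_mul _
    apply hint.congr
    apply ae_of_all
    intro x
    have h2 : gi i * (f x / gi i) = f x := by
      have := (hgi_pos i hpi).ne'
      field_simp
    simp only [hFdef]
    rw [← mul_assoc, h2]
  have hdecomp : ∫ x, f x * Real.logb 2 (f x / g x)
      = ∑ i ∈ J, ∫ x in B i, f x * Real.logb 2 (f x / gi i) := by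
    rw [integral_congr_ae haeeq, integral_finset_sum J hterm_int]
    exact Finset.sum_congr rfl (fun i _ => integral_indicator (hBmeas i))
  rw [hdecomp]
  exact Finset.sum_le_sum perbin
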